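/- The rank function defined from a rank-metric code C ≤ F_q^{n×m} by ρ_C(V) = (dim C − dim C(V^⊥))/m, where C(W) = {X ∈ C : colsp(X) ≤ W}, satisfies boundedness: 0 ≤ ρ_C(V) ≤ dim V for all subspaces V ≤ F_q^n. -/

import Mathlib

open Module

variable {K : Type} [Field K] [Fintype K] {n m : ℕ}

/-- Orthogonal complement w.r.t. the standard symmetric bilinear form on `Fin n → K`. -/
def stdPerp (V : Submodule K (Fin n → K)) : Submodule K (Fin n → K) where
  carrier := {w | ∀ v ∈ V, ∑ i, v i * w i = 0}
  zero_mem' := by intro v hv; simp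
  add_mem' := by
    intro a b ha hb v hv
    simp [Pi.add_apply, mul_add, Finset.sum_add_distrib, ha v hv, hb v hv]
  smul_mem' := by
    intro c a ha v hv
    simp only [Pi.smul_apply, smul_eq_mul, mul_left_comm, ← Finset.mul_sum, ha v hv, mul_zero]

/-- Matrices all of whose columns lie in `V` (i.e. with column space contained in `V`). -/
def colIn (m : ℕ) (V : Submodule K (Fin n → K)) : Submodule K (Matrix (Fin n) (Fin m) K) where
  carrier := {X | ∀ j, (fun i => X i j) ∈ V}
  zero_mem' := by
    intro j
    show (fun i => (0 : Matrix (Fin n) (Fin m) K) i j) ∈ V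
    simp only [Matrix.zero_apply]
    exact V.zero_mem
  add_mem' := by
    intro a b ha hb j
    exact V.add_mem (ha j) (hb j)
  smul_mem' := by
    intro c X hX j
    exact V.smul_mem c (hX j)

/-- The shortened subcode `C(W) = {X ∈ C : colsp X ≤ W}`. -/
def shortened (C : Submodule K (Matrix (Fin n) (Fin m) K))
    (W : Submodule K (Fin n → K)) : Submodule K (Matrix (Fin n) (Fin m) K) :=
  C ⊓ colIn m W

/-- The `q`-polymatroid rank function `ρ_C(V) = (dim C − dim C(V^⊥))/m`. -/
noncomputable def rhoCode (C : Submodule K (Matrix (Fin n) (Fin m) K))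
    (V : Submodule K (Fin n → K)) : ℚ :=
  ((finrank K C : ℚ) - (finrank K (shortened C (stdPerp V)) : ℚ)) / m

/-- The trace-dual code `C^⊥ = {X : tr(X Yᵀ) = 0 for all Y ∈ C}`. -/
def dualCode (C : Submodule K (Matrix (Fin n) (Fin m) K)) :
    Submodule K (Matrix (Fin n) (Fin m) K) where
  carrier := {X | ∀ Y ∈ C, ∑ i, ∑ j, X i j * Y i j = 0}
  zero_mem' := by intro Y hY; simp
  add_mem' := by
    intro a b ha hb Y hY
    simp [Matrix.add_apply, add_mul, Finset.sum_add_distrib, ha Y hY, hb Y hY]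
  smul_mem' := by
    intro c X hX Y hY
    simp only [Matrix.smul_apply, smul_eq_mul, mul_assoc, ← Finset.mul_sum, hX Y hY, mul_zero]

/-- `colIn m W` is linearly equivalent to `Fin m → W`. -/
noncomputable def colInEquiv (W : Submodule K (Fin n → K)) :
    colIn m W ≃ₗ[K] (Fin m → W) where
  toFun X := fun j => ⟨fun i => X.1 i j, X.2 j⟩
  invFun f := ⟨fun i j => (f j).1 i, fun j => (f j).2⟩
  left_inv X := rfl
  right_inv f := rfl
  map_add' X Y := rfl
  map_smul' c X := rfl

lemma finrank_colIn (W : Submodule K (Fin n → K)) :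
    finrank K (colIn m W) = m * finrank K W := by
  rw [LinearEquiv.finrank_eq (colInEquiv W), Module.finrank_pi_fintype,
    Finset.sum_const, Finset.card_univ, Fintype.card_fin, smul_eq_mul]

/-- The bilinear pairing map to the dual of `V`. -/
noncomputable def pairMap (V : Submodule K (Fin n → K)) :
    (Fin n → K) →ₗ[K] Module.Dual K V where
  toFun w :=
    { toFun := fun v => ∑ i, (v : Fin n → K) i * w i
      map_add' := by
        intro a b
        simp [add_mul, Finset.sum_add_distrib]
      map_smul' := by
        intro c a
        simp [mul_assoc, Finset.mul_sum] }
  map_add' a b := by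
    ext v
    simp [mul_add, Finset.sum_add_distrib]
  map_smul' c a := by
    ext v
    simp [mul_left_comm, Finset.mul_sum]

lemma ker_pairMap (V : Submodule K (Fin n → K)) :
    LinearMap.ker (pairMap V) = stdPerp V := by
  ext w
  constructor
  · intro hw v hv
    have := congrFun (congrArg (fun f => f.toFun) hw) ⟨v, hv⟩
    exact this
  · intro hw
    ext v
    exact hw v.1 v.2

lemma finrank_add_stdPerp (V : Submodule K (Fin n → K)) :
    n ≤ finrank K V + finrank K (stdPerp V) := by
  have h := LinearMap.finrank_range_add_finrank_ker (pairMap V)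
  rw [ker_pairMap, Module.finrank_fin_fun] at h
  have h2 : finrank K (LinearMap.range (pairMap V)) ≤ finrank K V := by
    have := Submodule.finrank_le (LinearMap.range (pairMap V))
    rwa [Subspace.dual_finrank_eq] at this
  omega

/-- boundedness of the rank function of a rank-metric code:
`0 ≤ ρ_C(V) ≤ dim V`. -/
theorem rhoCode_bounds (hm : 0 < m)
    (C : Submodule K (Matrix (Fin n) (Fin m) K)) (V : Submodule K (Fin n → K)) :
    0 ≤ rhoCode C V ∧ rhoCode C V ≤ (finrank K V : ℚ) := by
  unfold rhoCode
  set W := stdPerp V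
  have hle : finrank K (shortened C W) ≤ finrank K C :=
    Submodule.finrank_mono inf_le_left
  have hmQ : (0 : ℚ) < m := by exact_mod_cast hm
  constructor
  · apply div_nonneg _ hmQ.le
    have : (finrank K (shortened C W) : ℚ) ≤ (finrank K C : ℚ) := by exact_mod_cast hle
    linarith
  · rw [div_le_iff₀ hmQ]
    have key : finrank K C ≤ finrank K (shortened C W) + m * finrank K V := by
      have hsup := Submodule.finrank_sup_add_finrank_inf_eq C (colIn m W)
      have htop : finrank K ↥(C ⊔ colIn m W) ≤ n * m := by
        have := Submodule.finrank_le (C ⊔ colIn m W)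
        rwa [Module.finrank_matrix, Fintype.card_fin, Fintype.card_fin,
          Module.finrank_self, mul_one] at this
      have hcol : finrank K (colIn m W) = m * finrank K W := finrank_colIn W
      have hperp : n ≤ finrank K V + finrank K W := finrank_add_stdPerp V
      have : finrank K C + m * finrank K W ≤ finrank K (shortened C W) + n * m := by
        have : finrank K C + finrank K (colIn m W)
            ≤ finrank K (shortened C W) + n * m := by
          rw [← hsup]; unfold shortened; omega
        omega
      nlinarith
    have : (finrank K C : ℚ) ≤ (finrank K (shortened C W) : ℚ) + m * finrank K V := by
      exact_mod_cast key
    push_cast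
    linarith
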